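/- Fix an integer D ≥ 2, real numbers α > 0 and p ∈ (1,2), and k ∈ ℕ₀, and let ε̲, ε̄₁, ε̄₂, ε̄ be as defined in the context. Then the function r ↦ ε̄(r) − ε̲(r) is continuous and strictly decreasing on the interval (1, min{p, D/(D−1)}), there exists a unique r₀ ∈ (1, min{p, D/(D−1)}) with ε̄(r₀) = ε̲(r₀), and ε̲(r) < ε̄(r) for every r ∈ (1, r₀). -/

import Mathlib

/-- The lower threshold `ε̲(r)` from the parameter analysis. -/
noncomputable def elow (D : ℕ) (α p r : ℝ) : ℝ :=
  (4 + 2 * α) * (2 - p) * ((D : ℝ) - 1) * (r - 1) /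
    (2 * α * ((D : ℝ) + 1) * (p - r) + (2 + 3 * α) * (2 - p) * ((D : ℝ) - 1) * (r - 1))

/-- The upper threshold `ε̄₁(r)`. -/
noncomputable def ebar1 (D : ℕ) (α r : ℝ) : ℝ :=
  (8 + 4 * α) /
    (4 + 6 * α + (2 + α) * ((D : ℝ) + 1) * r / ((D : ℝ) - 1 - ((D : ℝ) - 2) * r))

/-- The upper threshold `ε̄₂(r)`. -/
noncomputable def ebar2 (D : ℕ) (k : ℕ) (r : ℝ) : ℝ :=
  ((D : ℝ) - ((D : ℝ) - 1) * r) / (((D : ℝ) + ((k : ℝ) + 1) / 2) * r)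

/-- The upper threshold `ε̄(r) = min {ε̄₁(r), ε̄₂(r)}`. -/
noncomputable def ebar (D : ℕ) (α : ℝ) (k : ℕ) (r : ℝ) : ℝ :=
  min (ebar1 D α r) (ebar2 D k r)

set_option maxHeartbeats 2000000 in
/-- For `D ≥ 2`, `α > 0`, `p ∈ (1,2)`, `k ∈ ℕ₀`, the function
`r ↦ ε̄(r) - ε̲(r)` is continuous and strictly decreasing on `(1, min {p, D/(D-1)})`,
there is a unique `r₀` in this interval with `ε̄(r₀) = ε̲(r₀)`, and `ε̲(r) < ε̄(r)` for
every `r ∈ (1, r₀)`. -/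
theorem stmt16 (D : ℕ) (hD : 2 ≤ D) (α p : ℝ) (hα : 0 < α)
    (hp1 : 1 < p) (hp2 : p < 2) (k : ℕ) :
    ContinuousOn (fun r => ebar D α k r - elow D α p r)
      (Set.Ioo 1 (min p ((D : ℝ) / ((D : ℝ) - 1)))) ∧
    StrictAntiOn (fun r => ebar D α k r - elow D α p r)
      (Set.Ioo 1 (min p ((D : ℝ) / ((D : ℝ) - 1)))) ∧
    ∃ r₀ ∈ Set.Ioo (1 : ℝ) (min p ((D : ℝ) / ((D : ℝ) - 1))),
      ebar D α k r₀ = elow D α p r₀ ∧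
      (∀ r ∈ Set.Ioo (1 : ℝ) (min p ((D : ℝ) / ((D : ℝ) - 1))),
        ebar D α k r = elow D α p r → r = r₀) ∧
      ∀ r ∈ Set.Ioo (1 : ℝ) r₀, elow D α p r < ebar D α k r := by
  have hd : (2:ℝ) ≤ (D:ℝ) := by exact_mod_cast hD
  have hd1 : (0:ℝ) < (D:ℝ) - 1 := by linarith
  have hd0 : (0:ℝ) < (D:ℝ) := by linarith
  set m := min p ((D:ℝ) / ((D:ℝ) - 1)) with hm_def
  have hm1 : (1:ℝ) < m := hm_def ▸ lt_min hp1 ((lt_div_iff₀ hd1).mpr (by linarith))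
  have hmp : m ≤ p := hm_def ▸ min_le_left _ _
  have hmd : ((D:ℝ)-1) * m ≤ (D:ℝ) := by
    have h : m ≤ (D:ℝ)/((D:ℝ)-1) := hm_def ▸ min_le_right p ((D:ℝ)/((D:ℝ)-1))
    rw [le_div_iff₀ hd1] at h
    linarith
  clear_value m
  have hk0 : (0:ℝ) ≤ (k:ℝ) := Nat.cast_nonneg k
  have hKpos : (0:ℝ) < (D:ℝ) + ((k:ℝ)+1)/2 := by linarith
  -- positivity of the inner denominator of ebar1
  have hg : ∀ r ∈ Set.Icc (1:ℝ) m, 0 < (D:ℝ) - 1 - ((D:ℝ)-2)*r := by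
    rintro r ⟨hr1, hrm⟩
    have h1 : ((D:ℝ)-1)*r ≤ (D:ℝ) := le_trans (show ((D:ℝ)-1)*r ≤ ((D:ℝ)-1)*m by nlinarith) hmd
    nlinarith [mul_le_mul_of_nonneg_left h1 (show (0:ℝ) ≤ (D:ℝ)-2 by linarith)]
  -- positivity of the denominator of elow
  have hdenlow : ∀ r ∈ Set.Icc (1:ℝ) m,
      0 < 2*α*((D:ℝ)+1)*(p-r) + (2+3*α)*(2-p)*((D:ℝ)-1)*(r-1) := by
    rintro r ⟨hr1, hrm⟩
    have hrp : r ≤ p := hrm.trans hmp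
    rcases lt_or_eq_of_le hrp with h | h
    · nlinarith [mul_pos (mul_pos hα (show (0:ℝ) < (D:ℝ)+1 by linarith))
        (show (0:ℝ) < p - r by linarith),
        mul_nonneg (mul_nonneg (mul_nonneg (show (0:ℝ) ≤ 2+3*α by linarith)
          (show (0:ℝ) ≤ 2-p by linarith)) hd1.le) (show (0:ℝ) ≤ r-1 by linarith)]
    · nlinarith [mul_pos (mul_pos (mul_pos (show (0:ℝ) < 2+3*α by linarith)
        (show (0:ℝ) < 2-p by linarith)) hd1) (show (0:ℝ) < r-1 by rw [h]; linarith),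
        mul_nonneg (mul_nonneg (show (0:ℝ) ≤ 2*α by linarith)
          (show (0:ℝ) ≤ (D:ℝ)+1 by linarith)) (show (0:ℝ) ≤ p-r by linarith)]
  -- positivity of the denominator of ebar1
  have hden1 : ∀ r ∈ Set.Icc (1:ℝ) m,
      0 < 4+6*α + (2+α)*((D:ℝ)+1)*r/((D:ℝ)-1-((D:ℝ)-2)*r) := by
    intro r hr
    have h1 := hg r hr
    have h2 : 0 ≤ (2+α)*((D:ℝ)+1)*r/((D:ℝ)-1-((D:ℝ)-2)*r) :=
      div_nonneg (mul_nonneg (mul_nonneg (show (0:ℝ) ≤ 2+α by linarith)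
        (show (0:ℝ) ≤ (D:ℝ)+1 by linarith)) (by linarith [hr.1])) h1.le
    linarith
  -- strict monotonicity of elow
  have helow : ∀ r ∈ Set.Icc (1:ℝ) m, ∀ s ∈ Set.Icc (1:ℝ) m, r < s →
      elow D α p r < elow D α p s := by
    intro r hr s hs hrs
    have h1 := hdenlow r hr
    have h2 := hdenlow s hs
    simp only [elow]
    rw [div_lt_div_iff₀ h1 h2]
    nlinarith [mul_pos (mul_pos (mul_pos (mul_pos (show (0:ℝ) < 4+2*α by linarith)
      (show (0:ℝ) < 2-p by linarith)) hd1)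
      (mul_pos (mul_pos (show (0:ℝ) < 2*α by linarith)
        (show (0:ℝ) < (D:ℝ)+1 by linarith)) (show (0:ℝ) < s-r by linarith)))
      (show (0:ℝ) < p-1 by linarith)]
  -- strict antitonicity of ebar1
  have hebar1 : ∀ r ∈ Set.Icc (1:ℝ) m, ∀ s ∈ Set.Icc (1:ℝ) m, r < s →
      ebar1 D α s < ebar1 D α r := by
    intro r hr s hs hrs
    have hgr := hg r hr
    have hgs := hg s hs
    have hrr : r * ((D:ℝ)-1-((D:ℝ)-2)*s) < s * ((D:ℝ)-1-((D:ℝ)-2)*r) := by nlinarith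
    have hdiv : r/((D:ℝ)-1-((D:ℝ)-2)*r) < s/((D:ℝ)-1-((D:ℝ)-2)*s) :=
      (div_lt_div_iff₀ hgr hgs).mpr hrr
    have hc : (0:ℝ) < (2+α)*((D:ℝ)+1) := by nlinarith
    have hmono : (2+α)*((D:ℝ)+1)*r/((D:ℝ)-1-((D:ℝ)-2)*r)
        < (2+α)*((D:ℝ)+1)*s/((D:ℝ)-1-((D:ℝ)-2)*s) := by
      rw [mul_div_assoc, mul_div_assoc]
      exact mul_lt_mul_of_pos_left hdiv hc
    simp only [ebar1]
    rw [div_lt_div_iff₀ (hden1 s hs) (hden1 r hr)]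
    nlinarith [mul_lt_mul_of_pos_left hmono (show (0:ℝ) < 8+4*α by linarith)]
  -- strict antitonicity of ebar2
  have hebar2 : ∀ r ∈ Set.Icc (1:ℝ) m, ∀ s ∈ Set.Icc (1:ℝ) m, r < s →
      ebar2 D k s < ebar2 D k r := by
    intro r hr s hs hrs
    have hKr : (0:ℝ) < ((D:ℝ)+((k:ℝ)+1)/2)*r := mul_pos hKpos (by linarith [hr.1])
    have hKs : (0:ℝ) < ((D:ℝ)+((k:ℝ)+1)/2)*s := mul_pos hKpos (by linarith [hs.1])
    simp only [ebar2]
    rw [div_lt_div_iff₀ hKs hKr]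
    nlinarith [mul_pos (mul_pos hKpos hd0) (show (0:ℝ) < s-r by linarith)]
  have hebar : ∀ r ∈ Set.Icc (1:ℝ) m, ∀ s ∈ Set.Icc (1:ℝ) m, r < s →
      ebar D α k s < ebar D α k r := by
    intro r hr s hs hrs
    exact lt_min ((min_le_left _ _).trans_lt (hebar1 r hr s hs hrs))
      ((min_le_right _ _).trans_lt (hebar2 r hr s hs hrs))
  -- strict antitonicity of the difference on the closed interval
  have fanti : StrictAntiOn (fun r => ebar D α k r - elow D α p r) (Set.Icc 1 m) := by
    intro r hr s hs hrs
    have h1 := hebar r hr s hs hrs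
    have h2 := helow r hr s hs hrs
    show ebar D α k s - elow D α p s < ebar D α k r - elow D α p r
    linarith
  -- continuity on the closed interval
  have c1a : ContinuousOn (fun r => ebar1 D α r) (Set.Icc 1 m) := by
    simp only [ebar1]
    apply ContinuousOn.div continuousOn_const ?_ (fun r hr => (hden1 r hr).ne')
    apply ContinuousOn.add continuousOn_const
    exact ContinuousOn.div (by fun_prop) (by fun_prop) (fun r hr => (hg r hr).ne')
  have c1b : ContinuousOn (fun r => ebar2 D k r) (Set.Icc 1 m) := by
    simp only [ebar2]
    exact ContinuousOn.div (by fun_prop) (by fun_prop)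
      (fun r hr => (mul_pos hKpos (show (0:ℝ) < r by linarith [hr.1])).ne')
  have c2 : ContinuousOn (fun r => elow D α p r) (Set.Icc 1 m) := by
    simp only [elow]
    exact ContinuousOn.div (by fun_prop) (by fun_prop) (fun r hr => (hdenlow r hr).ne')
  have hcont : ContinuousOn (fun r => ebar D α k r - elow D α p r) (Set.Icc 1 m) := by
    have hmin : ContinuousOn (fun r => ebar D α k r) (Set.Icc 1 m) := by
      simp only [ebar]
      exact c1a.inf c1b
    exact hmin.sub c2
  -- values at the endpoints
  have h1Icc : (1:ℝ) ∈ Set.Icc (1:ℝ) m := ⟨le_refl 1, hm1.le⟩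
  have hmIcc : m ∈ Set.Icc (1:ℝ) m := ⟨hm1.le, le_refl m⟩
  have helow1 : elow D α p 1 = 0 := by simp [elow]
  have hF1 : 0 < ebar D α k 1 - elow D α p 1 := by
    rw [helow1, sub_zero]
    apply lt_min
    · exact div_pos (by linarith) (hden1 1 h1Icc)
    · apply div_pos (show (0:ℝ) < (D:ℝ) - ((D:ℝ)-1)*1 by linarith)
      exact mul_pos hKpos one_pos
  have hFm : ebar D α k m - elow D α p m < 0 := by
    rcases le_or_gt p ((D:ℝ)/((D:ℝ)-1)) with hpd | hpd
    · have hmeq : m = p := hm_def.trans (min_eq_left hpd)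
      have hpIcc : p ∈ Set.Icc (1:ℝ) m := ⟨hp1.le, hmeq.ge⟩
      have hC : (0:ℝ) < 2+3*α := by linarith
      have he : elow D α p p = (4+2*α)/(2+3*α) := by
        simp only [elow]
        rw [div_eq_div_iff (hdenlow p hpIcc).ne' hC.ne']
        ring
      have hT : 0 < (2+α)*((D:ℝ)+1)*p/((D:ℝ)-1-((D:ℝ)-2)*p) :=
        div_pos (mul_pos (mul_pos (show (0:ℝ) < 2+α by linarith)
          (show (0:ℝ) < (D:ℝ)+1 by linarith)) (by linarith)) (hg p hpIcc)
      have hb1 : ebar1 D α p < (4+2*α)/(2+3*α) := by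
        have h8 : (8+4*α)/(4+6*α) = (4+2*α)/(2+3*α) := by
          rw [div_eq_div_iff (by linarith : (4+6*α:ℝ) ≠ 0) hC.ne']
          ring
        calc ebar1 D α p < (8+4*α)/(4+6*α) := by
              simp only [ebar1]
              rw [div_lt_div_iff₀ (hden1 p hpIcc) (show (0:ℝ) < 4+6*α by linarith)]
              nlinarith [mul_pos (show (0:ℝ) < 8+4*α by linarith) hT]
          _ = _ := h8
      have hle : ebar D α k p ≤ ebar1 D α p := min_le_left _ _
      rw [hmeq, he]
      linarith
    · have hmeq : m = (D:ℝ)/((D:ℝ)-1) := hm_def.trans (min_eq_right hpd.le)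
      have he2 : ebar2 D k m = 0 := by
        simp only [ebar2]
        have hz : (D:ℝ) - ((D:ℝ)-1)*m = 0 := by
          rw [hmeq]
          field_simp
          ring
        rw [hz, zero_div]
      have hlow : 0 < elow D α p m := by
        apply div_pos ?_ (hdenlow m hmIcc)
        nlinarith [mul_pos (mul_pos (show (0:ℝ) < 4+2*α by linarith)
          (show (0:ℝ) < 2-p by linarith)) hd1]
      have hle : ebar D α k m ≤ 0 := he2 ▸ min_le_right _ _
      linarith
  -- intermediate value theorem
  obtain ⟨r₀, hr₀Icc, hFr₀'⟩ := intermediate_value_Icc' hm1.le hcont ⟨hFm.le, hF1.le⟩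
  have hFr₀ : ebar D α k r₀ - elow D α p r₀ = 0 := hFr₀'
  have hr₀1 : 1 < r₀ := by
    rcases lt_or_eq_of_le hr₀Icc.1 with h | h
    · exact h
    · exfalso; rw [← h] at hFr₀; linarith
  have hr₀m : r₀ < m := by
    rcases lt_or_eq_of_le hr₀Icc.2 with h | h
    · exact h
    · exfalso; rw [h] at hFr₀; linarith
  have hr₀Ioo : r₀ ∈ Set.Ioo (1:ℝ) m := ⟨hr₀1, hr₀m⟩
  refine ⟨hcont.mono Set.Ioo_subset_Icc_self, fanti.mono Set.Ioo_subset_Icc_self,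
    r₀, hr₀Ioo, sub_eq_zero.mp hFr₀, ?_, ?_⟩
  · intro r hr hEq
    apply fanti.injOn (Set.Ioo_subset_Icc_self hr) hr₀Icc
    show ebar D α k r - elow D α p r = ebar D α k r₀ - elow D α p r₀
    rw [hEq, sub_self]
    exact hFr₀.symm
  · intro r hr
    have hrIcc : r ∈ Set.Icc (1:ℝ) m := ⟨hr.1.le, hr.2.le.trans hr₀m.le⟩
    have h3 : ebar D α k r₀ - elow D α p r₀ < ebar D α k r - elow D α p r :=
      fanti hrIcc hr₀Icc hr.2
    linarith
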